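/- Let F be a field of characteristic 0, let K be an algebraic closure of F, and let A be a finite-dimensional F-algebra that is a semisimple ring. Let x, y ∈ A. If there exists a unit u of the K-algebra K ⊗_F A such that u * (1 ⊗ x) = (1 ⊗ y) * u, then there exists a unit v of A such that v * x = y * v. In other words, two elements of A that become conjugate over the algebraic closure are already conjugate by a unit of A. -/

import Mathlib

open scoped TensorProduct

set_option maxHeartbeats 1000000
set_option synthInstance.maxHeartbeats 400000

/-- In a finite-dimensional semisimple algebra over a field of characteristic
zero, two elements which become conjugate over an algebraic closure are
already conjugate by a unit of the algebra. -/
theorem stmt_4 (F K : Type*) [Field F] [CharZero F] [Field K] [Algebra F K]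
    [IsAlgClosure F K]
    (A : Type*) [Ring A] [Algebra F A] [FiniteDimensional F A]
    [IsSemisimpleRing A] (x y : A)
    (h : ∃ u : (K ⊗[F] A)ˣ,
      (u : K ⊗[F] A) * ((1 : K) ⊗ₜ[F] x) = ((1 : K) ⊗ₜ[F] y) * (u : K ⊗[F] A)) :
    ∃ v : Aˣ, (v : A) * x = y * (v : A) := by
  classical
  obtain ⟨u, hu⟩ := h
  -- the F-linear map whose kernel is the space of conjugating elements
  set f : A →ₗ[F] A := LinearMap.mulRight F x - LinearMap.mulLeft F y with hf
  set V : Submodule F A := LinearMap.ker f with hV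
  -- `u` lies in the kernel of the base change of `f`.
  have hufker : (f.lTensor K) (u : K ⊗[F] A) = 0 := by
    have hbc : ∀ z : K ⊗[F] A,
        (f.lTensor K) z = z * ((1 : K) ⊗ₜ[F] x) - ((1 : K) ⊗ₜ[F] y) * z := by
      intro z
      induction z using TensorProduct.induction_on with
      | zero => simp
      | tmul k a =>
          simp [hf, Algebra.TensorProduct.tmul_mul_tmul, TensorProduct.tmul_sub]
      | add z₁ z₂ h₁ h₂ =>
          simp [map_add, h₁, h₂, add_mul, mul_add]
          abel
    rw [hbc, hu, sub_self]
  -- hence it comes from `K ⊗ V` by flatness of `K` over `F`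
  have hexact : Function.Exact (V.subtype.lTensor K) (f.lTensor K) :=
    Module.Flat.lTensor_exact K (LinearMap.exact_subtype_ker_map f)
  obtain ⟨w, hw⟩ : ∃ w : K ⊗[F] V, (V.subtype.lTensor K) w = (u : K ⊗[F] A) :=
    (hexact (u : K ⊗[F] A)).mp hufker
  -- bases
  let bV : Module.Basis (Module.Free.ChooseBasisIndex F V) F V := Module.Free.chooseBasis F V
  let cA : Module.Basis (Module.Free.ChooseBasisIndex F A) F A := Module.Free.chooseBasis F A
  set ι := Module.Free.ChooseBasisIndex F V
  set κ := Module.Free.ChooseBasisIndex F A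
  -- write `u` as a `K`-combination of the `1 ⊗ bV k`
  let bVK : Module.Basis ι K (K ⊗[F] V) := Algebra.TensorProduct.basis K bV
  set coeffs : ι → K := fun k => bVK.repr w k with hcoeffs
  have hsub : ∀ z : K ⊗[F] V, (V.subtype.lTensor K) z = (V.subtype.baseChange K) z := by
    intro z
    induction z using TensorProduct.induction_on with
    | zero => simp
    | tmul k m => simp
    | add z₁ z₂ h₁ h₂ => simp [h₁, h₂]
  have hu_sum : (u : K ⊗[F] A) = ∑ k, coeffs k • ((1 : K) ⊗ₜ[F] (bV k : A)) := by
    rw [← hw, hsub]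
    conv_lhs => rw [← bVK.sum_repr w]
    rw [map_sum]
    refine Finset.sum_congr rfl fun k _ => ?_
    rw [map_smul]
    congr 1
    rw [show bVK k = (1 : K) ⊗ₜ[F] (bV k) from Algebra.TensorProduct.basis_apply bV k]
    simp
  -- the matrices of left multiplication by the basis vectors of V
  set Mk : ι → Matrix κ κ F :=
    fun k => LinearMap.toMatrix cA cA (LinearMap.mulLeft F (bV k : A)) with hMk
  -- the determinant polynomial
  set P : MvPolynomial ι F := Matrix.det
    (Matrix.of fun i j => ∑ k, MvPolynomial.C (Mk k i j) * MvPolynomial.X k) with hP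
  -- evaluating P
  have hevalK : ∀ t : ι → K,
      MvPolynomial.aeval t P =
        Matrix.det (Matrix.of fun i j : κ => ∑ k, t k • algebraMap F K (Mk k i j)) := by
    intro t
    rw [hP, AlgHom.map_det (MvPolynomial.aeval t)]
    congr 1
    ext i j
    simp [Matrix.map_apply, smul_eq_mul, map_sum, map_mul, MvPolynomial.aeval_C,
      MvPolynomial.aeval_X, mul_comm]
  have hevalF : ∀ t : ι → F,
      MvPolynomial.aeval t P =
        Matrix.det (Matrix.of fun i j : κ => ∑ k, t k • algebraMap F F (Mk k i j)) := by
    intro t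
    rw [hP, AlgHom.map_det (MvPolynomial.aeval t)]
    congr 1
    ext i j
    simp [Matrix.map_apply, smul_eq_mul, map_sum, map_mul, MvPolynomial.aeval_C,
      MvPolynomial.aeval_X, mul_comm]
  -- `mulLeft K (1 ⊗ a)` is the base change of `mulLeft F a`
  have hmulLeft_bc : ∀ a : A,
      LinearMap.mulLeft K ((1 : K) ⊗ₜ[F] a) = (LinearMap.mulLeft F a).baseChange K := by
    intro a
    refine LinearMap.ext fun z => ?_
    induction z using TensorProduct.induction_on with
    | zero => simp
    | tmul k m => simp [Algebra.TensorProduct.tmul_mul_tmul]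
    | add z₁ z₂ h₁ h₂ => simp [mul_add, ← h₁, ← h₂]
  -- toMatrix of left multiplication by u
  let D : Module.Basis κ K (K ⊗[F] A) := Algebra.TensorProduct.basis K cA
  have hmatu : LinearMap.toMatrix D D (LinearMap.mulLeft K (u : K ⊗[F] A)) =
      ∑ k, coeffs k • (Mk k).map (algebraMap F K) := by
    have h1 : LinearMap.mulLeft K (u : K ⊗[F] A) =
        ∑ k, coeffs k • LinearMap.mulLeft K ((1 : K) ⊗ₜ[F] (bV k : A)) := by
      refine LinearMap.ext fun z => ?_
      rw [hu_sum]
      simp [LinearMap.sum_apply, Finset.sum_mul, smul_mul_assoc]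
    rw [h1, map_sum]
    refine Finset.sum_congr rfl fun k _ => ?_
    rw [map_smul, hmulLeft_bc, hMk]
    congr 1
    exact LinearMap.toMatrix_baseChange K (LinearMap.mulLeft F ((bV k : V) : A)) cA cA
  -- the determinant of left multiplication by the unit u is nonzero
  have hdetu : LinearMap.det (LinearMap.mulLeft K (u : K ⊗[F] A)) ≠ 0 := by
    have hcomp : LinearMap.mulLeft K (u : K ⊗[F] A) ∘ₗ
        LinearMap.mulLeft K ((u⁻¹ : (K ⊗[F] A)ˣ) : K ⊗[F] A) = LinearMap.id := by
      rw [← LinearMap.mulLeft_mul, Units.mul_inv, LinearMap.mulLeft_one]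
    have := congrArg LinearMap.det hcomp
    rw [LinearMap.det_comp, LinearMap.det_id] at this
    exact left_ne_zero_of_mul_eq_one this
  -- hence P evaluated at coeffs is nonzero, so P ≠ 0
  have hPK : MvPolynomial.aeval coeffs P ≠ 0 := by
    rw [hevalK coeffs]
    rw [← LinearMap.det_toMatrix D] at hdetu
    convert hdetu using 2
    rw [hmatu]
    ext i j
    simp [Matrix.sum_apply, Matrix.map_apply, smul_eq_mul]
  have hPne : P ≠ 0 := by
    intro h0
    rw [h0, map_zero] at hPK
    exact hPK rfl
  -- since F is infinite, P has a nonzero value at an F-point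
  obtain ⟨t, ht⟩ : ∃ t : ι → F, MvPolynomial.eval t P ≠ 0 := by
    by_contra h'
    push_neg at h'
    exact hPne (MvPolynomial.funext fun t => by simp [h' t])
  -- the corresponding element of V
  set v0 : A := ∑ k, t k • (bV k : A) with hv0
  have hv0V : f v0 = 0 := by
    rw [hv0, map_sum]
    refine Finset.sum_eq_zero fun k _ => ?_
    rw [map_smul]
    have : f (bV k : A) = 0 := (bV k).2
    rw [this, smul_zero]
  -- its left multiplication has nonzero determinant
  have hdet0 : IsUnit (LinearMap.toMatrix cA cA (LinearMap.mulLeft F v0)).det := by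
    have hmat : LinearMap.toMatrix cA cA (LinearMap.mulLeft F v0) = ∑ k, t k • Mk k := by
      have h1 : LinearMap.mulLeft F v0 = ∑ k, t k • LinearMap.mulLeft F (bV k : A) := by
        refine LinearMap.ext fun z => ?_
        rw [hv0]
        simp [LinearMap.sum_apply, Finset.sum_mul, smul_mul_assoc]
      rw [h1, map_sum]
      refine Finset.sum_congr rfl fun k _ => ?_
      rw [map_smul]
    rw [isUnit_iff_ne_zero, hmat]
    intro h0
    apply ht
    have haev : MvPolynomial.eval t P = MvPolynomial.aeval t P := by
      rw [← MvPolynomial.coe_aeval_eq_eval]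
      rfl
    rw [haev, hevalF t, ← h0]
    congr 1
    ext i j
    simp [Matrix.sum_apply, Matrix.smul_apply, smul_eq_mul, Algebra.algebraMap_self]
  -- left multiplication by v0 is bijective
  have hbij : Function.Bijective (LinearMap.mulLeft F v0) := by
    have := LinearEquiv.ofIsUnitDet hdet0
    have hcoe := LinearEquiv.coe_ofIsUnitDet hdet0
    rw [← hcoe]
    exact (LinearEquiv.ofIsUnitDet hdet0).bijective
  -- so v0 is a unit
  obtain ⟨w0, hw0⟩ : ∃ w0 : A, v0 * w0 = 1 := by
    obtain ⟨w0, hw0⟩ := hbij.surjective 1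
    exact ⟨w0, hw0⟩
  have hw0' : w0 * v0 = 1 := by
    apply hbij.injective
    show v0 * (w0 * v0) = v0 * 1
    rw [← mul_assoc, hw0, one_mul, mul_one]
  refine ⟨⟨v0, w0, hw0, hw0'⟩, ?_⟩
  have := hv0V
  rw [hf] at this
  simpa [sub_eq_zero] using this
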